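/- Let d ≥ 1, let M, Q be real d×d matrices, let v, w be symmetric real d×d matrices, and let L be the 2d×2d block matrix L = [[M, 2QᵀQ],[v, −Mᵀ]]. For t ∈ ℝ, write exp(tL) in d×d blocks as [[ψ₁₁(t), ψ₁₂(t)],[ψ₂₁(t), ψ₂₂(t)]], and suppose that w·ψ₁₂(t) + ψ₂₂(t) is invertible for every t ∈ [0,T]. Then ψ(t) := (w·ψ₁₂(t) + ψ₂₂(t))⁻¹·(w·ψ₁₁(t) + ψ₂₁(t)) satisfies ψ(0) = w and, for every t ∈ [0,T], ψ is differentiable at t with ψ′(t) = ψ(t)M + Mᵀψ(t) − 2ψ(t)QᵀQψ(t) + v. -/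

import Mathlib

open Matrix NormedSpace
attribute [local instance] Matrix.linftyOpNormedRing Matrix.linftyOpNormedAlgebra

theorem hasDerivAt_block {d : ℕ} {f : ℝ → Matrix (Fin d ⊕ Fin d) (Fin d ⊕ Fin d) ℝ}
    {f' : Matrix (Fin d ⊕ Fin d) (Fin d ⊕ Fin d) ℝ} {t : ℝ}
    (hf : HasDerivAt f f' t) (g h : Fin d → Fin d ⊕ Fin d) :
    HasDerivAt (fun t => (f t).submatrix g h) (f'.submatrix g h) t := by
  let lm : Matrix (Fin d ⊕ Fin d) (Fin d ⊕ Fin d) ℝ →ₗ[ℝ] Matrix (Fin d) (Fin d) ℝ :=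
    { toFun := fun X => X.submatrix g h
      map_add' := fun X Y => congrFun (congrFun (Matrix.submatrix_add X Y) g) h
      map_smul' := fun r X => congrFun (congrFun (Matrix.submatrix_smul r X) g) h }
  exact ((LinearMap.toContinuousLinearMap lm).hasFDerivAt.comp_hasDerivAt t hf)

theorem stmt_5 (d : ℕ) (hd : 1 ≤ d) (T : ℝ) (hT : 0 < T)
    (M Q v w : Matrix (Fin d) (Fin d) ℝ)
    (hv : v.IsSymm) (hw : w.IsSymm)
    (L : Matrix (Fin d ⊕ Fin d) (Fin d ⊕ Fin d) ℝ)
    (hL : L = Matrix.fromBlocks M ((2:ℝ) • (Qᵀ * Q)) v (-Mᵀ))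
    (ψ₁₁ ψ₁₂ ψ₂₁ ψ₂₂ : ℝ → Matrix (Fin d) (Fin d) ℝ)
    (hψ₁₁ : ∀ t, ψ₁₁ t = (NormedSpace.exp (t • L)).toBlocks₁₁)
    (hψ₁₂ : ∀ t, ψ₁₂ t = (NormedSpace.exp (t • L)).toBlocks₁₂)
    (hψ₂₁ : ∀ t, ψ₂₁ t = (NormedSpace.exp (t • L)).toBlocks₂₁)
    (hψ₂₂ : ∀ t, ψ₂₂ t = (NormedSpace.exp (t • L)).toBlocks₂₂)
    (hinv : ∀ t ∈ Set.Icc (0:ℝ) T, IsUnit (w * ψ₁₂ t + ψ₂₂ t))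
    (ψ : ℝ → Matrix (Fin d) (Fin d) ℝ)
    (hψ : ∀ t, ψ t = (w * ψ₁₂ t + ψ₂₂ t)⁻¹ * (w * ψ₁₁ t + ψ₂₁ t)) :
    ψ 0 = w ∧ ∀ t ∈ Set.Icc (0:ℝ) T,
      HasDerivAt ψ (ψ t * M + Mᵀ * ψ t - (2:ℝ) • (ψ t * (Qᵀ * Q) * ψ t) + v) t := by
  have hexp0 : NormedSpace.exp ((0:ℝ) • L) = 1 := by rw [zero_smul, exp_zero]
  have h110 : ψ₁₁ 0 = 1 := by
    rw [hψ₁₁, hexp0, ← Matrix.fromBlocks_one, Matrix.toBlocks_fromBlocks₁₁]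
  have h120 : ψ₁₂ 0 = 0 := by
    rw [hψ₁₂, hexp0, ← Matrix.fromBlocks_one, Matrix.toBlocks_fromBlocks₁₂]
  have h210 : ψ₂₁ 0 = 0 := by
    rw [hψ₂₁, hexp0, ← Matrix.fromBlocks_one, Matrix.toBlocks_fromBlocks₂₁]
  have h220 : ψ₂₂ 0 = 1 := by
    rw [hψ₂₂, hexp0, ← Matrix.fromBlocks_one, Matrix.toBlocks_fromBlocks₂₂]
  constructor
  · rw [hψ, h110, h120, h210, h220]
    simp
  intro t ht
  -- derivative of the exponential
  have hE : HasDerivAt (fun u : ℝ => NormedSpace.exp (u • L)) (NormedSpace.exp (t • L) * L) t :=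
    hasDerivAt_exp_smul_const L t
  -- blocks of the derivative
  have hmul : ∀ E : Matrix (Fin d ⊕ Fin d) (Fin d ⊕ Fin d) ℝ, E * L =
      Matrix.fromBlocks (E.toBlocks₁₁ * M + E.toBlocks₁₂ * v)
        (E.toBlocks₁₁ * ((2:ℝ) • (Qᵀ * Q)) + E.toBlocks₁₂ * (-Mᵀ))
        (E.toBlocks₂₁ * M + E.toBlocks₂₂ * v)
        (E.toBlocks₂₁ * ((2:ℝ) • (Qᵀ * Q)) + E.toBlocks₂₂ * (-Mᵀ)) := by
    intro E
    conv_lhs => rw [← Matrix.fromBlocks_toBlocks E, hL]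
    rw [Matrix.fromBlocks_multiply]
  have hb : ∀ (g h : Fin d → Fin d ⊕ Fin d),
      HasDerivAt (fun u => (NormedSpace.exp (u • L)).submatrix g h)
        ((NormedSpace.exp (t • L) * L).submatrix g h) t := fun g h => hasDerivAt_block hE g h
  have hd11 : HasDerivAt ψ₁₁ (ψ₁₁ t * M + ψ₁₂ t * v) t := by
    have h := hb Sum.inl Sum.inl
    rw [hmul] at h
    have hfn : ψ₁₁ = fun u => (NormedSpace.exp (u • L)).submatrix Sum.inl Sum.inl :=
      funext fun u => hψ₁₁ u
    rw [hψ₁₁ t, hψ₁₂ t, hfn]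
    exact h
  have hd12 : HasDerivAt ψ₁₂ (ψ₁₁ t * ((2:ℝ) • (Qᵀ * Q)) + ψ₁₂ t * (-Mᵀ)) t := by
    have h := hb Sum.inl Sum.inr
    rw [hmul] at h
    have hfn : ψ₁₂ = fun u => (NormedSpace.exp (u • L)).submatrix Sum.inl Sum.inr :=
      funext fun u => hψ₁₂ u
    rw [hψ₁₁ t, hψ₁₂ t, hfn]
    exact h
  have hd21 : HasDerivAt ψ₂₁ (ψ₂₁ t * M + ψ₂₂ t * v) t := by
    have h := hb Sum.inr Sum.inl
    rw [hmul] at h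
    have hfn : ψ₂₁ = fun u => (NormedSpace.exp (u • L)).submatrix Sum.inr Sum.inl :=
      funext fun u => hψ₂₁ u
    rw [hψ₂₁ t, hψ₂₂ t, hfn]
    exact h
  have hd22 : HasDerivAt ψ₂₂ (ψ₂₁ t * ((2:ℝ) • (Qᵀ * Q)) + ψ₂₂ t * (-Mᵀ)) t := by
    have h := hb Sum.inr Sum.inr
    rw [hmul] at h
    have hfn : ψ₂₂ = fun u => (NormedSpace.exp (u • L)).submatrix Sum.inr Sum.inr :=
      funext fun u => hψ₂₂ u
    rw [hψ₂₁ t, hψ₂₂ t, hfn]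
    exact h
  -- A and B
  set S := Qᵀ * Q with hS
  set At := w * ψ₁₂ t + ψ₂₂ t with hAt
  set Bt := w * ψ₁₁ t + ψ₂₁ t with hBt
  have hA : HasDerivAt (fun u => w * ψ₁₂ u + ψ₂₂ u)
      ((2:ℝ) • (Bt * S) - At * Mᵀ) t := by
    have := (hd12.const_mul w).add hd22
    refine this.congr_deriv ?_
    simp only [hAt, hBt, hS, mul_add, add_mul, mul_smul_comm, smul_mul_assoc, mul_neg,
      sub_eq_add_neg, neg_add, smul_add, mul_assoc]
    abel
  have hB : HasDerivAt (fun u => w * ψ₁₁ u + ψ₂₁ u) (Bt * M + At * v) t := by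
    have := (hd11.const_mul w).add hd21
    refine this.congr_deriv ?_
    simp only [hAt, hBt, mul_add, add_mul, mul_assoc]
    abel
  -- inverse
  have hu : IsUnit At := hinv t ht
  set iA := Ring.inverse At with hiA
  have hu1 : iA * At = 1 := Ring.inverse_mul_cancel At hu
  have hu2 : At * iA = 1 := Ring.mul_inverse_cancel At hu
  have hInv : HasDerivAt (fun u => Ring.inverse (w * ψ₁₂ u + ψ₂₂ u))
      (-(iA * ((2:ℝ) • (Bt * S) - At * Mᵀ) * iA)) t := by
    have hfd := (hasFDerivAt_ringInverse (𝕜 := ℝ) hu.unit).comp_hasDerivAt t hA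
    refine hfd.congr_deriv ?_
    simp [hiA, Matrix.nonsing_inv_eq_ringInverse, Ring.inverse_unit, ContinuousLinearMap.mulLeftRight_apply, mul_assoc]
  have hmain := hInv.mul hB
  have hfun : ψ = fun u => Ring.inverse (w * ψ₁₂ u + ψ₂₂ u) * (w * ψ₁₁ u + ψ₂₁ u) := by
    funext u
    rw [hψ u, Matrix.nonsing_inv_eq_ringInverse]
  rw [show ((fun u => Ring.inverse (w * ψ₁₂ u + ψ₂₂ u)) * fun u => w * ψ₁₁ u + ψ₂₁ u) = fun u => Ring.inverse (w * ψ₁₂ u + ψ₂₂ u) * (w * ψ₁₁ u + ψ₂₁ u) from rfl] at hmain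
  rw [← hfun] at hmain
  have hψt : ψ t = iA * Bt := by rw [hψ t, Matrix.nonsing_inv_eq_ringInverse, ← hAt, ← hBt, hiA]
  refine hmain.congr_deriv ?_
  rw [hψt]
  have key : iA * ((2:ℝ) • (Bt * S) - At * Mᵀ) * iA * Bt =
      (2:ℝ) • (iA * Bt * S * (iA * Bt)) - Mᵀ * (iA * Bt) := by
    calc iA * ((2:ℝ) • (Bt * S) - At * Mᵀ) * iA * Bt
        = (2:ℝ) • (iA * Bt * S * (iA * Bt)) - (iA * At) * (Mᵀ * (iA * Bt)) := by
          simp only [mul_sub, sub_mul, smul_mul_assoc, mul_smul_comm, mul_assoc]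
      _ = (2:ℝ) • (iA * Bt * S * (iA * Bt)) - Mᵀ * (iA * Bt) := by rw [hu1, one_mul]
  have key2 : iA * (Bt * M + At * v) = iA * Bt * M + v := by
    rw [mul_add, ← mul_assoc, ← mul_assoc, hu1, one_mul]
  rw [neg_mul, key, key2]
  abel
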